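/- Generalized triangle inequality: for positive integers k₁, k₂, sets W ⊆ G^{k₁}, Y ⊆ G^{k₂}, and X, Z ⊆ G, one has |W × X| · |Y − Δ_{k₂}(Z)| ≤ |W × Y × Z − Δ_{k₁+k₂+1}(X)|. -/

import Mathlib

open Finset Pointwise

/-- Generalized triangle inequality:
`|W × X| · |Y − Δ_{k₂}(Z)| ≤ |W × Y × Z − Δ_{k₁+k₂+1}(X)|`. -/
theorem generalized_triangle {G : Type*} [AddCommGroup G] [Fintype G] [DecidableEq G]
    (k₁ k₂ : ℕ) (hk₁ : 0 < k₁) (hk₂ : 0 < k₂)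
    (W : Finset (Fin k₁ → G)) (Y : Finset (Fin k₂ → G)) (X Z : Finset G) :
    W.card * X.card * (Y - Z.image fun z => (fun _ => z : Fin k₂ → G)).card ≤
      ((W ×ˢ Y ×ˢ Z) -
        X.image fun x => ((fun _ => x : Fin k₁ → G), (fun _ => x : Fin k₂ → G), x)).card := by
  classical
  set D : Finset (Fin k₂ → G) := Y - Z.image fun z => (fun _ => z : Fin k₂ → G) with hD
  have hmem : ∀ d : Fin k₂ → G, ∃ y z, d ∈ D → y ∈ Y ∧ z ∈ Z ∧ y - (fun _ => z) = d := by
    intro d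
    by_cases hd : d ∈ D
    · rw [hD, Finset.mem_sub] at hd
      obtain ⟨y, hy, z', hz', h⟩ := hd
      rw [Finset.mem_image] at hz'
      obtain ⟨z, hz, rfl⟩ := hz'
      exact ⟨y, z, fun _ => ⟨hy, hz, h⟩⟩
    · exact ⟨d, d ⟨0, hk₂⟩, fun h => absurd h hd⟩
  choose yc zc hspec using hmem
  have key : (W ×ˢ X ×ˢ D).card ≤
      ((W ×ˢ Y ×ˢ Z) -
        X.image fun x => ((fun _ => x : Fin k₁ → G), (fun _ => x : Fin k₂ → G), x)).card := by
    apply Finset.card_le_card_of_injOn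
      (fun p => (p.1 - fun _ => p.2.1, yc p.2.2 - fun _ => p.2.1, zc p.2.2 - p.2.1))
    · rintro ⟨w, x, d⟩ hp
      simp only [Finset.mem_coe, Finset.mem_product] at hp
      obtain ⟨hw, hx, hd⟩ := hp
      obtain ⟨hy, hz, heq⟩ := hspec d hd
      rw [Finset.mem_coe, Finset.mem_sub]
      refine ⟨(w, yc d, zc d), ?_, ((fun _ => x : Fin k₁ → G), (fun _ => x : Fin k₂ → G), x),
        Finset.mem_image_of_mem _ hx, rfl⟩
      simp [Finset.mem_product, hw, hy, hz]
    · rintro ⟨w₁, x₁, d₁⟩ hp ⟨w₂, x₂, d₂⟩ hq hfe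
      simp only [Finset.mem_coe, Finset.mem_product] at hp hq
      obtain ⟨hw₁, hx₁, hd₁⟩ := hp
      obtain ⟨hw₂, hx₂, hd₂⟩ := hq
      obtain ⟨hy₁, hz₁, he₁⟩ := hspec d₁ hd₁
      obtain ⟨hy₂, hz₂, he₂⟩ := hspec d₂ hd₂
      simp only [Prod.mk.injEq] at hfe
      obtain ⟨h1, h2, h3⟩ := hfe
      have hdd : d₁ = d₂ := by
        rw [← he₁, ← he₂]
        funext i
        have e2 := congrFun h2 i
        simp only [Pi.sub_apply] at e2 ⊢
        rw [← sub_sub_sub_cancel_right (yc d₁ i) (zc d₁) x₁, e2, h3,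
          sub_sub_sub_cancel_right]
      subst hdd
      have hx : x₁ = x₂ := sub_right_injective h3
      subst hx
      have hw : w₁ = w₂ := sub_left_inj.mp h1
      simp [hw]
  calc W.card * X.card * D.card = (W ×ˢ X ×ˢ D).card := by
        simp [Finset.card_product, Nat.mul_assoc]
      _ ≤ _ := key
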